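/- Let Ê, E and F be closed subspaces of a complex Hilbert space H with Ê ≠ {0} and E ≠ {0}. Then cos∠(Ê,F) ≥ 1 − sin∠(E,F) − sin∠(Ê,E). -/

import Mathlib

/-- `cos∠(A,B) := inf{‖Q_B a‖ : a ∈ A, ‖a‖ = 1}`. -/
noncomputable def cosAngle {H : Type*} [NormedAddCommGroup H] [InnerProductSpace ℂ H]
    (A B : Submodule ℂ H) [CompleteSpace B] : ℝ :=
  sInf ((fun a => ‖(B.orthogonalProjectionOnto a : H)‖) '' {a : H | a ∈ A ∧ ‖a‖ = 1})

/-- `sin∠(A,B) := sup{‖a − Q_B a‖ : a ∈ A, ‖a‖ = 1}`. -/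
noncomputable def sinAngle {H : Type*} [NormedAddCommGroup H] [InnerProductSpace ℂ H]
    (A B : Submodule ℂ H) [CompleteSpace B] : ℝ :=
  sSup ((fun a => ‖a - (B.orthogonalProjectionOnto a : H)‖) '' {a : H | a ∈ A ∧ ‖a‖ = 1})

lemma norm_sub_proj_le {H : Type*} [NormedAddCommGroup H] [InnerProductSpace ℂ H]
    (B : Submodule ℂ H) [CompleteSpace B] (v : H) :
    ‖v - (B.orthogonalProjectionOnto v : H)‖ ≤ ‖v‖ := by
  have h := Submodule.orthogonalProjectionFn_norm_sq B v
  rw [Submodule.orthogonalProjectionFn_eq] at h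
  nlinarith [norm_nonneg (v - (B.orthogonalProjectionOnto v : H)), norm_nonneg v,
    norm_nonneg ((B.orthogonalProjectionOnto v : H))]

lemma exists_unit {H : Type*} [NormedAddCommGroup H] [InnerProductSpace ℂ H]
    (A : Submodule ℂ H) (hA : A ≠ ⊥) : ∃ a : H, a ∈ A ∧ ‖a‖ = 1 := by
  obtain ⟨x, hx, hx0⟩ := Submodule.exists_mem_ne_zero_of_ne_bot hA
  refine ⟨(‖x‖⁻¹ : ℂ) • x, A.smul_mem _ hx, ?_⟩
  have : ‖x‖ ≠ 0 := norm_ne_zero_iff.mpr hx0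
  simp [norm_smul, this]

lemma sin_nonneg' {H : Type*} [NormedAddCommGroup H] [InnerProductSpace ℂ H]
    (A B : Submodule ℂ H) [CompleteSpace B] (hA : A ≠ ⊥) : 0 ≤ sinAngle A B := by
  obtain ⟨a, ha, hna⟩ := exists_unit A hA
  have hbdd : BddAbove ((fun a => ‖a - (B.orthogonalProjectionOnto a : H)‖) ''
      {a : H | a ∈ A ∧ ‖a‖ = 1}) := by
    refine ⟨1, ?_⟩
    rintro _ ⟨x, ⟨hxA, hx1⟩, rfl⟩
    simpa [hx1] using norm_sub_proj_le B x
  have := le_csSup hbdd ⟨a, ⟨ha, hna⟩, rfl⟩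
  exact le_trans (norm_nonneg _) this

lemma sin_bound {H : Type*} [NormedAddCommGroup H] [InnerProductSpace ℂ H]
    (A B : Submodule ℂ H) [CompleteSpace B] (hA : A ≠ ⊥) {b : H} (hb : b ∈ A) :
    ‖b - (B.orthogonalProjectionOnto b : H)‖ ≤ sinAngle A B * ‖b‖ := by
  have hbdd : BddAbove ((fun a => ‖a - (B.orthogonalProjectionOnto a : H)‖) ''
      {a : H | a ∈ A ∧ ‖a‖ = 1}) := by
    refine ⟨1, ?_⟩
    rintro _ ⟨x, ⟨hxA, hx1⟩, rfl⟩
    simpa [hx1] using norm_sub_proj_le B x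
  rcases eq_or_ne b 0 with rfl | hb0
  · simp
  · have hnb : ‖b‖ ≠ 0 := norm_ne_zero_iff.mpr hb0
    set c : H := (‖b‖⁻¹ : ℂ) • b with hc
    have hcA : c ∈ A := A.smul_mem _ hb
    have hcn : ‖c‖ = 1 := by simp [hc, norm_smul, hnb]
    have hle : ‖c - (B.orthogonalProjectionOnto c : H)‖ ≤ sinAngle A B :=
      le_csSup hbdd ⟨c, ⟨hcA, hcn⟩, rfl⟩
    have key : ‖c - (B.orthogonalProjectionOnto c : H)‖ = ‖b‖⁻¹ * ‖b - (B.orthogonalProjectionOnto b : H)‖ := by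
      rw [hc, map_smul]
      have : (‖b‖⁻¹ : ℂ) • b - ((((‖b‖⁻¹ : ℂ) • B.orthogonalProjectionOnto b) : B) : H)
          = (‖b‖⁻¹ : ℂ) • (b - (B.orthogonalProjectionOnto b : H)) := by
        simp [smul_sub]
      rw [this, norm_smul]
      simp
    rw [key] at hle
    have hpos : 0 < ‖b‖ := lt_of_le_of_ne (norm_nonneg b) (Ne.symm hnb)
    calc ‖b - (B.orthogonalProjectionOnto b : H)‖
        = ‖b‖ * (‖b‖⁻¹ * ‖b - (B.orthogonalProjectionOnto b : H)‖) := by field_simp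
      _ ≤ ‖b‖ * sinAngle A B := mul_le_mul_of_nonneg_left hle hpos.le
      _ = sinAngle A B * ‖b‖ := mul_comm _ _

/-- `cos∠(Ê,F) ≥ 1 − sin∠(E,F) − sin∠(Ê,E)`. -/
theorem stmt_6 {H : Type*} [NormedAddCommGroup H] [InnerProductSpace ℂ H] [CompleteSpace H]
    (Ehat E F : Submodule ℂ H) [CompleteSpace E] [CompleteSpace F]
    (hEhat : Ehat ≠ ⊥) (hE : E ≠ ⊥) :
    1 - sinAngle E F - sinAngle Ehat E ≤ cosAngle Ehat F := by
  obtain ⟨a0, ha0, hn0⟩ := exists_unit Ehat hEhat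
  have hne : ((fun a => ‖(F.orthogonalProjectionOnto a : H)‖) '' {a : H | a ∈ Ehat ∧ ‖a‖ = 1}).Nonempty :=
    ⟨_, ⟨a0, ⟨ha0, hn0⟩, rfl⟩⟩
  apply le_csInf hne
  rintro _ ⟨a, ⟨haE, ha1⟩, rfl⟩
  set b : H := (E.orthogonalProjectionOnto a : H) with hbdef
  have hbE : b ∈ E := (E.orthogonalProjectionOnto a).2
  have hnb : ‖b‖ ≤ 1 := by
    have h := Submodule.orthogonalProjectionFn_norm_sq E a
    rw [Submodule.orthogonalProjectionFn_eq] at h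
    nlinarith [norm_nonneg (a - b), norm_nonneg b]
  -- a - Q_F a = (b - Q_F b) + ((a-b) - Q_F (a-b))
  have hadd : (F.orthogonalProjectionOnto (a - b) : H)
      = (F.orthogonalProjectionOnto a : H) - (F.orthogonalProjectionOnto b : H) := by
    rw [map_sub]; rfl
  have hsplit : a - (F.orthogonalProjectionOnto a : H)
      = (b - (F.orthogonalProjectionOnto b : H)) + ((a - b) - (F.orthogonalProjectionOnto (a - b) : H)) := by
    rw [hadd]; abel
  have h1 : ‖b - (F.orthogonalProjectionOnto b : H)‖ ≤ sinAngle E F * ‖b‖ :=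
    sin_bound E F hE hbE
  have h2 : ‖(a - b) - (F.orthogonalProjectionOnto (a - b) : H)‖ ≤ ‖a - b‖ :=
    norm_sub_proj_le F (a - b)
  have h3 : ‖a - b‖ ≤ sinAngle Ehat E := by
    have hbdd : BddAbove ((fun a => ‖a - (E.orthogonalProjectionOnto a : H)‖) ''
        {a : H | a ∈ Ehat ∧ ‖a‖ = 1}) := by
      refine ⟨1, ?_⟩
      rintro _ ⟨x, ⟨hxA, hx1⟩, rfl⟩
      simpa [hx1] using norm_sub_proj_le E x
    exact le_csSup hbdd ⟨a, ⟨haE, ha1⟩, rfl⟩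
  have hsinEF : 0 ≤ sinAngle E F := sin_nonneg' E F hE
  have htot : ‖a - (F.orthogonalProjectionOnto a : H)‖ ≤ sinAngle E F + sinAngle Ehat E := by
    rw [hsplit]
    calc ‖_ + _‖ ≤ ‖b - (F.orthogonalProjectionOnto b : H)‖
          + ‖(a - b) - (F.orthogonalProjectionOnto (a - b) : H)‖ := norm_add_le _ _
      _ ≤ sinAngle E F * ‖b‖ + ‖a - b‖ := add_le_add h1 h2
      _ ≤ sinAngle E F * 1 + sinAngle Ehat E := by
          exact add_le_add (mul_le_mul_of_nonneg_left hnb hsinEF) h3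
      _ = sinAngle E F + sinAngle Ehat E := by ring
  have := norm_sub_norm_le a (a - (F.orthogonalProjectionOnto a : H))
  have haq : a - (a - (F.orthogonalProjectionOnto a : H)) = (F.orthogonalProjectionOnto a : H) := by abel
  rw [haq] at this
  rw [ha1] at this
  linarith
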